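/- Let G be a tree with a weight function ω : E(G) → Z_{>0}, and let (G_ω, r) be an increasing weighted tree (i.e., along every simple path from a leaf to the root r of length at least 2, the edge weights are weakly increasing). If G is not a star graph centered at r, then there exists a longest simple path r = v₀ → v₁ → ⋯ → v_k from r such that: (1) v_k is a leaf; (2) if u ∈ N_G(v_{k−2}) is a non-leaf then ω(v_{k−1}v_{k−2}) ≤ ω(v_{k−2}u); (3) the only non-leaf neighbor of v_{k−1} is v_{k−2}; (4) ω(v_{k−1}u) ≤ ω(v_{k−1}v_{k−2}) for all u ∈ N_G(v_{k−1}); and (5) ω(v_{k−1}v_k) ≤ ω(v_{k−1}u) for all u ∈ N_G(v_{k−1}). -/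

import Mathlib

open MvPolynomial SimpleGraph

/-- The weight function `ω` on the edges of `G` is weakly increasing along every
simple path from a leaf to the root `r`. -/
def IsIncreasingRoot {n : ℕ} (G : SimpleGraph (Fin n)) [DecidableRel G.Adj]
    (ω : Sym2 (Fin n) → ℕ) (r : Fin n) : Prop :=
  ∀ v : Fin n, G.degree v = 1 → ∀ p : G.Walk v r, p.IsPath →
    ∀ i : ℕ, i + 2 < p.support.length →
      ω s(p.support.getD i v, p.support.getD (i + 1) v) ≤
        ω s(p.support.getD (i + 1) v, p.support.getD (i + 2) v)

/-- The weight function `ω` is strictly increasing along every simple path from a leaf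
to the root `r`. -/
def IsStrictlyIncreasingRoot {n : ℕ} (G : SimpleGraph (Fin n)) [DecidableRel G.Adj]
    (ω : Sym2 (Fin n) → ℕ) (r : Fin n) : Prop :=
  ∀ v : Fin n, G.degree v = 1 → ∀ p : G.Walk v r, p.IsPath →
    ∀ i : ℕ, i + 2 < p.support.length →
      ω s(p.support.getD i v, p.support.getD (i + 1) v) <
        ω s(p.support.getD (i + 1) v, p.support.getD (i + 2) v)

/-- A vertex `v₂` is special: there is a simple path `v₁ → v₂ → v₃ → ⋯ → r` from a leaf `v₁`
of length at least 2 with `ω(v₁v₂) = ω(v₂v₃)`. -/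
def IsSpecialVertex {n : ℕ} (G : SimpleGraph (Fin n)) [DecidableRel G.Adj]
    (ω : Sym2 (Fin n) → ℕ) (r : Fin n) (v₂ : Fin n) : Prop :=
  ∃ (v₁ : Fin n) (p : G.Walk v₁ r), G.degree v₁ = 1 ∧ p.IsPath ∧ 2 ≤ p.length ∧
    p.support.getD 1 v₁ = v₂ ∧
    ω s(p.support.getD 0 v₁, p.support.getD 1 v₁) =
      ω s(p.support.getD 1 v₁, p.support.getD 2 v₁)

/-- An edge `uv` is special: there is a simple path `v₁ → u → v → ⋯ → r` (at least 3 vertices)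
with `ω(v₁u) = ω(uv)`. -/
def IsSpecialEdge {n : ℕ} (G : SimpleGraph (Fin n))
    (ω : Sym2 (Fin n) → ℕ) (r : Fin n) (e : Sym2 (Fin n)) : Prop :=
  ∃ (v₁ : Fin n) (p : G.Walk v₁ r), p.IsPath ∧ 2 ≤ p.length ∧
    e = s(p.support.getD 1 v₁, p.support.getD 2 v₁) ∧
    ω s(p.support.getD 0 v₁, p.support.getD 1 v₁) =
      ω s(p.support.getD 1 v₁, p.support.getD 2 v₁)

/-- `μ(v)`: the maximal weight of an edge at `v`. -/
def muWeight {n : ℕ} (G : SimpleGraph (Fin n)) [DecidableRel G.Adj]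
    (ω : Sym2 (Fin n) → ℕ) (v : Fin n) : ℕ :=
  (G.neighborFinset v).sup fun u => ω s(u, v)

/-- The set `A(G_ω)` of vertices admitting a simple path `v = v₁ → ⋯ → v_{2m}` (`m ≥ 1`)
with `ω(v_{2m-1}v_{2m}) < μ(v_{2m})`. -/
def Aset {n : ℕ} (G : SimpleGraph (Fin n)) [DecidableRel G.Adj]
    (ω : Sym2 (Fin n) → ℕ) : Set (Fin n) :=
  {v | ∃ (m : ℕ) (w : Fin n) (p : G.Walk v w), 1 ≤ m ∧ p.IsPath ∧
    p.support.length = 2 * m ∧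
    ω s(p.support.getD (2 * m - 2) v, w) < muWeight G ω w}

section AuxLemmas
set_option linter.unusedSectionVars false
variable {V : Type*} [DecidableEq V] {G : SimpleGraph V}
open SimpleGraph.Walk

namespace MyAuxGLP

lemma support_getD_length {u v : V} (p : G.Walk u v) (d : V) :
    p.support.getD p.length d = v := by
  induction p with
  | nil => rfl
  | cons h p ih => simpa using ih

lemma exists_concat {u v : V} (p : G.Walk u v) (hl : p.length ≠ 0) :
    ∃ (x : V) (q : G.Walk u x) (h : G.Adj x v), p = q.concat h := by
  cases p with
  | nil => simp at hl
  | cons h q =>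
    obtain ⟨x, q', h', hq⟩ := exists_cons_eq_concat h q
    exact ⟨x, q', h', hq⟩

lemma isPath_concat {u v w : V} {p : G.Walk u v} (h : G.Adj v w) (hp : p.IsPath)
    (hw : w ∉ p.support) : (p.concat h).IsPath := by
  rw [← isPath_reverse_iff, reverse_concat, cons_isPath_iff]
  refine ⟨hp.reverse, ?_⟩
  simpa using hw

lemma isPath_of_concat {u v w : V} {p : G.Walk u v} {h : G.Adj v w}
    (hp : (p.concat h).IsPath) : p.IsPath := by
  rw [← isPath_reverse_iff, reverse_concat, cons_isPath_iff] at hp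
  exact (isPath_reverse_iff p).mp hp.1

lemma eq_penult_of_adj_end (ht : G.IsTree) {u c b x : V} (s : G.Walk u c) (h₀ : G.Adj c b)
    (hp : (s.concat h₀).IsPath) (hadj : G.Adj b x) (hx : x ∈ (s.concat h₀).support) :
    x = c := by
  have hone : (Walk.cons hadj.symm Walk.nil : G.Walk x b).IsPath := by
    simp [cons_isPath_iff, hadj.ne']
  have huniq := (ht.existsUnique_path x b).unique (hp.dropUntil hx) hone
  have hq : s.concat h₀ = ((s.concat h₀).takeUntil x hx).concat hadj.symm := by
    conv_lhs => rw [← (s.concat h₀).take_spec hx]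
    rw [huniq]
    rfl
  have h2 := congrArg Walk.support hq
  rw [support_concat, support_concat] at h2
  have hsup' : s.support = ((s.concat h₀).takeUntil x hx).support := by
    have := congrArg List.dropLast h2
    simpa using this
  have hlen : s.length = ((s.concat h₀).takeUntil x hx).length := by
    have := congrArg List.length hsup'
    simpa [length_support] using this
  have := support_getD_length ((s.concat h₀).takeUntil x hx) x
  rw [← hsup', ← hlen, support_getD_length] at this
  exact this.symm

lemma endpoint_leaf {n : ℕ} {G : SimpleGraph (Fin n)} [DecidableRel G.Adj]
    (ht : G.IsTree) {r w : Fin n} (p : G.Walk r w) (hp : p.IsPath)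
    (hmax : ∀ (w' : Fin n) (q : G.Walk r w'), q.IsPath → q.length ≤ p.length)
    (hl : p.length ≠ 0) : G.degree w = 1 := by
  obtain ⟨y, p₁, h₁, rfl⟩ := exists_concat p hl
  have hyw : y ∈ G.neighborFinset w := by simp [SimpleGraph.mem_neighborFinset, h₁.symm]
  by_contra hdeg
  have hpos : 0 < G.degree w := Finset.card_pos.mpr ⟨y, hyw⟩
  have h2 : 1 < G.degree w := lt_of_le_of_ne hpos (Ne.symm hdeg)
  obtain ⟨u, hu, hne⟩ := Finset.exists_mem_ne h2 y
  have hadj : G.Adj w u := (SimpleGraph.mem_neighborFinset _ _ _).mp hu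
  have hu_not : u ∉ (p₁.concat h₁).support := fun hmem =>
    hne (eq_penult_of_adj_end ht p₁ h₁ hp hadj hmem)
  have := hmax u ((p₁.concat h₁).concat hadj) (isPath_concat hadj hp hu_not)
  simp [length_concat] at this

lemma getD_cc {r z y w : V} (p₂ : G.Walk r z) (h₂ : G.Adj z y) (h₁ : G.Adj y w) (d : V) :
    ((p₂.concat h₂).concat h₁).support.getD p₂.length d = z ∧
    ((p₂.concat h₂).concat h₁).support.getD (p₂.length + 1) d = y ∧
    ((p₂.concat h₂).concat h₁).support.getD (p₂.length + 2) d = w := by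
  have hsup : ((p₂.concat h₂).concat h₁).support = (p₂.support ++ [y]) ++ [w] := by
    simp [support_concat, List.concat_eq_append]
  have hl2 : p₂.support.length = p₂.length + 1 := length_support p₂
  have ha1 : p₂.length < (p₂.support ++ [y]).length := by
    simp only [List.length_append, List.length_singleton]
    omega
  have ha2 : p₂.length < p₂.support.length := by omega
  have ha3 : p₂.length + 1 < (p₂.support ++ [y]).length := by
    simp only [List.length_append, List.length_singleton]
    omega
  have ha4 : p₂.support.length ≤ p₂.length + 1 := by omega
  refine ⟨?_, ?_, ?_⟩
  · rw [hsup, List.getD_append _ _ _ _ ha1, List.getD_append _ _ _ _ ha2]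
    exact support_getD_length p₂ d
  · rw [hsup, List.getD_append _ _ _ _ ha3, List.getD_append_right _ _ _ _ ha4, hl2]
    simp
  · have := support_getD_length ((p₂.concat h₂).concat h₁) d
    simpa [length_concat] using this

end MyAuxGLP
end AuxLemmas

/-- **Lemma (existence of a good longest path).**
If `(G_ω, r)` is an increasing weighted tree and `G` is not a star centered at `r`,
then there is a longest simple path `r = v₀ → v₁ → ⋯ → v_k` from `r` such that:
(1) `v_k` is a leaf; (2) if `u ∈ N(v_{k-2})` is a non-leaf then `ω(v_{k-1}v_{k-2}) ≤ ω(v_{k-2}u)`;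
(3) the only non-leaf neighbor of `v_{k-1}` is `v_{k-2}`;
(4) `ω(v_{k-1}u) ≤ ω(v_{k-1}v_{k-2})` for all `u ∈ N(v_{k-1})`;
(5) `ω(v_{k-1}v_k) ≤ ω(v_{k-1}u)` for all `u ∈ N(v_{k-1})`. -/
theorem exists_good_longest_path {n : ℕ} (G : SimpleGraph (Fin n)) [DecidableRel G.Adj]
    (ω : Sym2 (Fin n) → ℕ) (r : Fin n)
    (htree : G.IsTree) (hpos : ∀ e ∈ G.edgeSet, 1 ≤ ω e)
    (hroot : IsIncreasingRoot G ω r)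
    (hnotstar : ¬ ∀ e ∈ G.edgeSet, r ∈ e) :
    ∃ (w : Fin n) (p : G.Walk r w), p.IsPath ∧
      (∀ (w' : Fin n) (q : G.Walk r w'), q.IsPath → q.length ≤ p.length) ∧
      2 ≤ p.length ∧
      -- (1) v_k is a leaf
      G.degree w = 1 ∧
      -- (2)
      (∀ u ∈ G.neighborSet (p.support.getD (p.length - 2) r), G.degree u ≠ 1 →
        ω s(p.support.getD (p.length - 1) r, p.support.getD (p.length - 2) r) ≤
          ω s(p.support.getD (p.length - 2) r, u)) ∧
      -- (3)
      (∀ u ∈ G.neighborSet (p.support.getD (p.length - 1) r), G.degree u ≠ 1 →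
        u = p.support.getD (p.length - 2) r) ∧
      -- (4)
      (∀ u ∈ G.neighborSet (p.support.getD (p.length - 1) r),
        ω s(p.support.getD (p.length - 1) r, u) ≤
          ω s(p.support.getD (p.length - 1) r, p.support.getD (p.length - 2) r)) ∧
      -- (5)
      (∀ u ∈ G.neighborSet (p.support.getD (p.length - 1) r),
        ω s(p.support.getD (p.length - 1) r, w) ≤ ω s(p.support.getD (p.length - 1) r, u)) := by
  classical
  -- longest path length
  have hL0 : (0:ℕ) ∈ {l : ℕ | ∃ (w : Fin n) (p : G.Walk r w), p.IsPath ∧ p.length = l} :=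
    ⟨r, Walk.nil, Walk.IsPath.nil, rfl⟩
  have hbdd : BddAbove {l : ℕ | ∃ (w : Fin n) (p : G.Walk r w), p.IsPath ∧ p.length = l} := by
    refine ⟨n, ?_⟩
    rintro l ⟨w, p, hp, rfl⟩
    have := hp.length_lt
    simpa using this.le
  have hex : ∃ k : ℕ, (∃ (w : Fin n) (p : G.Walk r w), p.IsPath ∧ p.length = k) ∧
      (∀ (w' : Fin n) (q : G.Walk r w'), q.IsPath → q.length ≤ k) :=
    ⟨_, Nat.sSup_mem ⟨0, hL0⟩ hbdd, fun w' q hq => le_csSup hbdd ⟨w', q, hq, rfl⟩⟩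
  obtain ⟨k, ⟨w0, p0, hp0, hl0⟩, hmax⟩ := hex
  -- 2 ≤ k
  have hk2 : 2 ≤ k := by
    push_neg at hnotstar
    obtain ⟨e, he, hre⟩ := hnotstar
    revert he hre
    refine Sym2.ind (fun a b he hre => ?_) e
    have hab : G.Adj a b := (G.mem_edgeSet).mp he
    rw [Sym2.mem_iff] at hre
    push_neg at hre
    obtain ⟨pr0⟩ := htree.isConnected.preconnected r a
    obtain ⟨q, hqp⟩ := pr0.toPath
    have hql : q.length ≠ 0 := fun h0 => hre.1 (Walk.eq_of_length_eq_zero h0)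
    by_cases hb : b ∈ q.support
    · obtain ⟨y0, t, h', hqe⟩ := MyAuxGLP.exists_concat q hql
      have hqp' : (t.concat h').IsPath := hqe ▸ hqp
      have hby : b = y0 := MyAuxGLP.eq_penult_of_adj_end htree t h' hqp' hab (hqe ▸ hb)
      have htl : t.length ≠ 0 := fun h0 =>
        hre.2 ((Walk.eq_of_length_eq_zero h0).trans hby.symm)
      have h2q : 2 ≤ q.length := by rw [hqe, Walk.length_concat]; omega
      exact h2q.trans (hmax a q hqp)
    · have := hmax b (q.concat hab) (MyAuxGLP.isPath_concat hab hqp hb)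
      rw [Walk.length_concat] at this
      omega
  -- the bound B and the minimizing longest path
  have hB : ∀ e : Sym2 (Fin n), ω e ≤ (Finset.univ : Finset (Sym2 (Fin n))).sup ω :=
    fun e => Finset.le_sup (Finset.mem_univ e)
  set B := (Finset.univ : Finset (Sym2 (Fin n))).sup ω with hBdef
  have hMne : Set.Nonempty {m : ℕ | ∃ (w : Fin n) (p : G.Walk r w), p.IsPath ∧ p.length = k ∧
      (B+1) * ω s(p.support.getD (k-2) r, p.support.getD (k-1) r)
        + ω s(p.support.getD (k-1) r, p.support.getD k r) = m} :=
    ⟨_, w0, p0, hp0, hl0, rfl⟩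
  obtain ⟨w, p, hp, hlen, hFp⟩ := Nat.sInf_mem hMne
  have hmin : ∀ (w' : Fin n) (q : G.Walk r w'), q.IsPath → q.length = k →
      (B+1) * ω s(p.support.getD (k-2) r, p.support.getD (k-1) r)
        + ω s(p.support.getD (k-1) r, p.support.getD k r)
      ≤ (B+1) * ω s(q.support.getD (k-2) r, q.support.getD (k-1) r)
        + ω s(q.support.getD (k-1) r, q.support.getD k r) := by
    intro w' q hq hql
    rw [hFp]
    exact Nat.sInf_le ⟨w', q, hq, hql, rfl⟩
  clear hFp
  -- decompose p = (p₂.concat h₂).concat h₁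
  obtain ⟨y, p₁, h₁, rfl⟩ := MyAuxGLP.exists_concat p (by omega)
  obtain ⟨z, p₂, h₂, rfl⟩ := MyAuxGLP.exists_concat p₁ (by
    rw [Walk.length_concat] at hlen; omega)
  have hk : k = p₂.length + 2 := by
    rw [Walk.length_concat, Walk.length_concat] at hlen; omega
  have hp₁ : (p₂.concat h₂).IsPath := MyAuxGLP.isPath_of_concat hp
  have hp₂ : p₂.IsPath := MyAuxGLP.isPath_of_concat hp₁
  obtain ⟨e2, e1, e0⟩ := MyAuxGLP.getD_cc p₂ h₂ h₁ r
  have hmin' : ∀ (w' : Fin n) (q : G.Walk r w'), q.IsPath → q.length = k →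
      (B+1) * ω s(z, y) + ω s(y, w)
      ≤ (B+1) * ω s(q.support.getD p₂.length r, q.support.getD (p₂.length+1) r)
        + ω s(q.support.getD (p₂.length+1) r, q.support.getD (p₂.length+2) r) := by
    intro w' q hq hql
    have h := hmin w' q hq hql
    rw [show k - 2 = p₂.length by omega, show k - 1 = p₂.length + 1 by omega,
      show k = p₂.length + 2 from hk, e2, e1, e0] at h
    exact h
  have hwleaf : G.degree w = 1 :=
    MyAuxGLP.endpoint_leaf htree _ hp (fun w' q hq => (hmax w' q hq).trans_eq hlen.symm)
      (by omega)
  -- condition (2)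
  have cond2 : ∀ u, G.Adj z u → G.degree u ≠ 1 → ω s(y, z) ≤ ω s(z, u) := by
    intro u hzu hdeg
    by_cases huy : u = y
    · subst huy
      exact le_of_eq (congrArg ω Sym2.eq_swap)
    by_cases hus : u ∈ p₂.support
    · rcases Nat.eq_zero_or_pos p₂.length with h0 | hposl
      · exfalso
        have hrz : r = z := Walk.eq_of_length_eq_zero h0
        have hsl : p₂.support.length = 1 := by rw [Walk.length_support, h0]
        have hsup1 : p₂.support = [r] := by
          rw [Walk.support_eq_cons] at hsl ⊢
          simp only [List.length_cons, Nat.add_eq_right] at hsl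
          rw [List.length_eq_zero_iff.mp hsl]
        rw [hsup1] at hus
        simp at hus
        subst hus
        exact G.loopless.irrefl z (hrz ▸ hzu)
      · obtain ⟨c, p₃, h₃, hp₂e⟩ := MyAuxGLP.exists_concat p₂ (by omega)
        have huc : u = c :=
          MyAuxGLP.eq_penult_of_adj_end htree p₃ h₃ (hp₂e ▸ hp₂) hzu (hp₂e ▸ hus)
        subst huc
        have heq : Walk.cons h₁.symm (Walk.cons h₂.symm (Walk.cons h₃.symm p₃.reverse))
            = ((p₂.concat h₂).concat h₁).reverse := by
          rw [hp₂e]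
          simp [Walk.reverse_concat]
        have hpath : (Walk.cons h₁.symm (Walk.cons h₂.symm
            (Walk.cons h₃.symm p₃.reverse))).IsPath := by
          rw [heq]; exact hp.reverse
        have hb : (1:ℕ) + 2 < (Walk.cons h₁.symm (Walk.cons h₂.symm
            (Walk.cons h₃.symm p₃.reverse))).support.length := by
          simp [Walk.length_support]
        have := hroot w hwleaf _ hpath 1 hb
        have hc0 : p₃.reverse.support.getD 0 w = u := by
          rw [Walk.support_eq_cons]; rfl
        simp only [Walk.support_cons, List.getD_cons_succ, List.getD_cons_zero, hc0] at this
        exact this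
    · -- u not on the path and not a leaf: extend through u
      have hd1 : 0 < G.degree u :=
        Finset.card_pos.mpr ⟨z, (G.mem_neighborFinset u z).mpr hzu.symm⟩
      have h2d : 1 < G.degree u := lt_of_le_of_ne hd1 (Ne.symm hdeg)
      obtain ⟨x, hx, hxz⟩ := Finset.exists_mem_ne h2d z
      have hux : G.Adj u x := (G.mem_neighborFinset u x).mp hx
      have hq1 : (p₂.concat hzu).IsPath := MyAuxGLP.isPath_concat hzu hp₂ hus
      have hxns : x ∉ (p₂.concat hzu).support := fun hmem =>
        hxz (MyAuxGLP.eq_penult_of_adj_end htree p₂ hzu hq1 hux hmem)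
      have hqp : ((p₂.concat hzu).concat hux).IsPath := MyAuxGLP.isPath_concat hux hq1 hxns
      have hql : ((p₂.concat hzu).concat hux).length = k := by
        rw [Walk.length_concat, Walk.length_concat]; omega
      have hcmp := hmin' x _ hqp hql
      obtain ⟨f2, f1, f0⟩ := MyAuxGLP.getD_cc p₂ hzu hux r
      rw [f2, f1, f0] at hcmp
      rw [show s(y,z) = s(z,y) from Sym2.eq_swap]
      by_contra hlt
      push_neg at hlt
      have h1 : ω s(z,u) + 1 ≤ ω s(z,y) := hlt
      have h2 : (B+1) * (ω s(z,u) + 1) ≤ (B+1) * ω s(z,y) := Nat.mul_le_mul_left _ h1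
      rw [Nat.mul_add, Nat.mul_one] at h2
      have h3 := hB s(u,x)
      linarith
  -- condition (3)
  have cond3 : ∀ u, G.Adj y u → G.degree u ≠ 1 → u = z := by
    intro u hyu hdeg
    by_contra huz
    have hun : u ∉ (p₂.concat h₂).support := fun hmem =>
      huz (MyAuxGLP.eq_penult_of_adj_end htree p₂ h₂ hp₁ hyu hmem)
    have hqp : ((p₂.concat h₂).concat hyu).IsPath := MyAuxGLP.isPath_concat hyu hp₁ hun
    have hql : ((p₂.concat h₂).concat hyu).length = k := by
      rw [Walk.length_concat, Walk.length_concat]; omega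
    exact hdeg (MyAuxGLP.endpoint_leaf htree _ hqp
      (fun w' q hq => (hmax w' q hq).trans_eq hql.symm) (by omega))
  -- condition (4)
  have cond4 : ∀ u, G.Adj y u → ω s(y, u) ≤ ω s(y, z) := by
    intro u hyu
    by_cases huz : u = z
    · subst huz; exact le_refl _
    · have hun : u ∉ (p₂.concat h₂).support := fun hmem =>
        huz (MyAuxGLP.eq_penult_of_adj_end htree p₂ h₂ hp₁ hyu hmem)
      have hqp : ((p₂.concat h₂).concat hyu).IsPath := MyAuxGLP.isPath_concat hyu hp₁ hun
      have hql : ((p₂.concat h₂).concat hyu).length = k := by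
        rw [Walk.length_concat, Walk.length_concat]; omega
      have huleaf : G.degree u = 1 := MyAuxGLP.endpoint_leaf htree _ hqp
        (fun w' q hq => (hmax w' q hq).trans_eq hql.symm) (by omega)
      have heq : Walk.cons hyu.symm (Walk.cons h₂.symm p₂.reverse)
          = ((p₂.concat h₂).concat hyu).reverse := by
        simp [Walk.reverse_concat]
      have hpath : (Walk.cons hyu.symm (Walk.cons h₂.symm p₂.reverse)).IsPath := by
        rw [heq]; exact hqp.reverse
      have hb : (0:ℕ) + 2 < (Walk.cons hyu.symm
          (Walk.cons h₂.symm p₂.reverse)).support.length := by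
        simp [Walk.length_support]
      have := hroot u huleaf _ hpath 0 hb
      have hz0 : p₂.reverse.support.getD 0 u = z := by
        rw [Walk.support_eq_cons]; rfl
      simp only [Walk.support_cons, List.getD_cons_succ, List.getD_cons_zero, hz0] at this
      rw [show s(y,u) = s(u,y) from Sym2.eq_swap]
      exact this
  -- condition (5)
  have cond5 : ∀ u, G.Adj y u → ω s(y, w) ≤ ω s(y, u) := by
    intro u hyu
    by_cases huz : u = z
    · subst huz
      exact cond4 w h₁
    · have hun : u ∉ (p₂.concat h₂).support := fun hmem =>
        huz (MyAuxGLP.eq_penult_of_adj_end htree p₂ h₂ hp₁ hyu hmem)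
      have hqp : ((p₂.concat h₂).concat hyu).IsPath := MyAuxGLP.isPath_concat hyu hp₁ hun
      have hql : ((p₂.concat h₂).concat hyu).length = k := by
        rw [Walk.length_concat, Walk.length_concat]; omega
      have hcmp := hmin' u _ hqp hql
      obtain ⟨f2, f1, f0⟩ := MyAuxGLP.getD_cc p₂ h₂ hyu r
      rw [f2, f1, f0] at hcmp
      exact Nat.le_of_add_le_add_left hcmp
  -- assemble
  have hL' : ((p₂.concat h₂).concat h₁).length = p₂.length + 2 := by
    rw [Walk.length_concat, Walk.length_concat]
  refine ⟨w, (p₂.concat h₂).concat h₁, hp,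
    fun w' q hq => (hmax w' q hq).trans_eq hlen.symm, by omega, hwleaf, ?_, ?_, ?_, ?_⟩
  · simp only [hL', show p₂.length + 2 - 2 = p₂.length from by omega,
      show p₂.length + 2 - 1 = p₂.length + 1 from by omega, e2, e1]
    exact fun u hu => cond2 u hu
  · simp only [hL', show p₂.length + 2 - 2 = p₂.length from by omega,
      show p₂.length + 2 - 1 = p₂.length + 1 from by omega, e2, e1]
    exact fun u hu => cond3 u hu
  · simp only [hL', show p₂.length + 2 - 2 = p₂.length from by omega,
      show p₂.length + 2 - 1 = p₂.length + 1 from by omega, e2, e1]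
    exact fun u hu => cond4 u hu
  · simp only [hL', show p₂.length + 2 - 2 = p₂.length from by omega,
      show p₂.length + 2 - 1 = p₂.length + 1 from by omega, e2, e1]
    exact fun u hu => cond5 u hu
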